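/- (Forward-kernel representation, from the proof of Lemma A.3.) Assume (A1). Let 0 ≤ k < i ≤ n and let f be a bounded measurable function on X^{n+1} which depends only on the coordinates (x_i, …, x_n). Then L_i⋯L_{n−1} f(x_{0:i}) depends on x_{0:i} only through x_i, so that h(x_i) := L_i⋯L_{n−1} f(x_i) / L_i⋯L_{n−1}(x_i, X^{n+1}) is well defined, and for every x_{0:k} ∈ X^{k+1}, L_k⋯L_{n−1} f(x_{0:k}) / L_k⋯L_{n−1}(x_k, X^{n+1}) = ∫_X h(x_i) F_{k|n} F_{k+1|n} ⋯ F_{i−1|n}(x_k, dx_i), where F_{k|n} F_{k+1|n} ⋯ F_{i−1|n} denotes the composition of the forward smoothing kernels. -/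

import Mathlib

/- Forward-kernel representation (from the proof of Lemma A.3) of Olsson,
Cappé, Douc, Moulines: under (A1), if `f` depends only on the coordinates
`(x_i, …, x_n)` and `k < i ≤ n`, then `L_i⋯L_{n−1}f(x_{0:i})` depends on
`x_{0:i}` only through `x_i` and
`L_k⋯L_{n−1}f(x_{0:k}) / L_k⋯L_{n−1}(x_k, X^{n+1})
  = ∫ h(x_i) F_{k|n}⋯F_{i−1|n}(x_k, dx_i)` with
`h(x_i) = L_i⋯L_{n−1}f(x_i)/L_i⋯L_{n−1}(x_i, X^{n+1})`. -/

open MeasureTheory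

noncomputable section

variable {X : Type*} [MeasurableSpace X] {Y : Type*}

/-- `LF μ q g ys n m f x` is the iterated unnormalized smoothing operator
`(L_{n-m} ⋯ L_{n-1} f)(x_{0:n-m})`, paths being represented as elements of `ℕ → X`. -/
def LF (μ : Measure X) (q : X → X → ℝ) (g : X → Y → ℝ) (ys : ℕ → Y) (n : ℕ) :
    ℕ → ((ℕ → X) → ℝ) → (ℕ → X) → ℝ
  | 0, f, x => f x
  | m + 1, f, x =>
      ∫ x', g x' (ys (n - m)) * q (x (n - m - 1)) x' *
        LF μ q g ys n m f (Function.update x (n - m) x') ∂μ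

/-- The total mass `L_k ⋯ L_{n-1}(x_k, X^{n+1})`, which depends on `x_{0:k}`
only through `x_k`. -/
def Lmass (μ : Measure X) (q : X → X → ℝ) (g : X → Y → ℝ) (ys : ℕ → Y) (n k : ℕ) (xk : X) : ℝ :=
  LF μ q g ys n (n - k) (fun _ => 1) (fun _ => xk)

/-- The forward smoothing kernel `F_{k|n}(x, ·)`. -/
def Fker (μ : Measure X) (q : X → X → ℝ) (g : X → Y → ℝ) (ys : ℕ → Y) (n k : ℕ) (x : X) :
    Measure X :=
  if k < n then
    μ.withDensity fun x' => ENNReal.ofReal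
      (g x' (ys (k + 1)) * Lmass μ q g ys n (k + 1) x' * q x x' / Lmass μ q g ys n k x)
  else μ.withDensity fun x' => ENNReal.ofReal (q x x')

/-- `kcompFrom K m ν j = ν K_m K_{m+1} ⋯ K_{m+j}`. -/
def kcompFrom (K : ℕ → X → Measure X) (m : ℕ) (ν : Measure X) : ℕ → Measure X
  | 0 => ν.bind (K m)
  | j + 1 => (kcompFrom K m ν j).bind (K (m + j + 1))

open scoped ENNReal NNReal

/-! ### Auxiliary lemmas -/

lemma LF_succ (μ : Measure X) (q : X → X → ℝ) (g : X → Y → ℝ) (ys : ℕ → Y) (n : ℕ)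
    (m : ℕ) (f : (ℕ → X) → ℝ) (x : ℕ → X) :
    LF μ q g ys n (m + 1) f x = ∫ x', g x' (ys (n - m)) * q (x (n - m - 1)) x' *
        LF μ q g ys n m f (Function.update x (n - m) x') ∂μ := rfl

lemma bdd_integrable {ν : Measure X} [IsFiniteMeasure ν] {h : X → ℝ}
    (hm : Measurable h) {C : ℝ} (hb : ∀ x, |h x| ≤ C) : Integrable h ν :=
  (integrable_const C).mono' hm.aestronglyMeasurable
    (Filter.Eventually.of_forall (by simpa [Real.norm_eq_abs] using hb))

lemma abs_mul3_le {a b c A B Cc : ℝ} (ha : 0 ≤ a) (hA : a ≤ A) (hb : 0 ≤ b) (hB : b ≤ B)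
    (hc : |c| ≤ Cc) : |a * b * c| ≤ A * B * Cc := by
  rw [abs_mul, abs_mul, abs_of_nonneg ha, abs_of_nonneg hb]
  exact mul_le_mul (mul_le_mul hA hB hb (ha.trans hA)) hc (abs_nonneg _)
    (mul_nonneg (ha.trans hA) (hb.trans hB))

lemma isProb_bind (ν : Measure X) [IsProbabilityMeasure ν] (K : X → Measure X)
    (hK : Measurable K) (hKp : ∀ x, IsProbabilityMeasure (K x)) :
    IsProbabilityMeasure (ν.bind K) := by
  constructor
  rw [Measure.bind_apply MeasurableSet.univ hK.aemeasurable]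
  simp only [fun x => (hKp x).measure_univ, lintegral_one, measure_univ]

lemma integral_bind_eq {ν : Measure X} [IsFiniteMeasure ν] {K : X → Measure X}
    (hK : Measurable K) (hKp : ∀ y, IsProbabilityMeasure (K y)) {h : X → ℝ}
    (hh : Measurable h) {C : ℝ} (hb : ∀ z, |h z| ≤ C) :
    ∫ z, h z ∂(ν.bind K) = ∫ y, ∫ z, h z ∂(K y) ∂ν := by
  have hbf : IsFiniteMeasure (ν.bind K) := by
    constructor
    rw [Measure.bind_apply MeasurableSet.univ hK.aemeasurable]
    simp only [fun y => (hKp y).measure_univ, lintegral_one]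
    exact measure_lt_top ν _
  have hAm : Measurable (fun y => ∫⁻ z, ENNReal.ofReal (h z) ∂(K y)) :=
    (Measure.measurable_lintegral hh.ennreal_ofReal).comp hK
  have hBm : Measurable (fun y => ∫⁻ z, ENNReal.ofReal (-h z) ∂(K y)) :=
    (Measure.measurable_lintegral hh.neg.ennreal_ofReal).comp hK
  have hAb : ∀ y, (∫⁻ z, ENNReal.ofReal (h z) ∂(K y)) ≤ ENNReal.ofReal C := by
    intro y
    calc ∫⁻ z, ENNReal.ofReal (h z) ∂(K y)
        ≤ ∫⁻ _, ENNReal.ofReal C ∂(K y) :=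
          lintegral_mono fun z => ENNReal.ofReal_le_ofReal ((le_abs_self _).trans (hb z))
      _ = ENNReal.ofReal C := by simp [(hKp y).measure_univ]
  have hBb : ∀ y, (∫⁻ z, ENNReal.ofReal (-h z) ∂(K y)) ≤ ENNReal.ofReal C := by
    intro y
    calc ∫⁻ z, ENNReal.ofReal (-h z) ∂(K y)
        ≤ ∫⁻ _, ENNReal.ofReal C ∂(K y) :=
          lintegral_mono fun z => ENNReal.ofReal_le_ofReal ((neg_le_abs _).trans (hb z))
      _ = ENNReal.ofReal C := by simp [(hKp y).measure_univ]
  have h_int : ∀ (ρ : Measure X), IsFiniteMeasure ρ → Integrable h ρ := by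
    intro ρ hρ
    exact (integrable_const C).mono' hh.aestronglyMeasurable
      (Filter.Eventually.of_forall (by simpa [Real.norm_eq_abs] using hb))
  rw [integral_eq_lintegral_pos_part_sub_lintegral_neg_part (h_int _ hbf),
    Measure.lintegral_bind hK.aemeasurable hh.ennreal_ofReal.aemeasurable,
    Measure.lintegral_bind (f := fun z => ENNReal.ofReal (-h z)) hK.aemeasurable
      hh.neg.ennreal_ofReal.aemeasurable]
  have hinner : ∀ y, ∫ z, h z ∂(K y) =
      (∫⁻ z, ENNReal.ofReal (h z) ∂(K y)).toReal -
      (∫⁻ z, ENNReal.ofReal (-h z) ∂(K y)).toReal := fun y =>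
    integral_eq_lintegral_pos_part_sub_lintegral_neg_part
      (h_int _ (by haveI := hKp y; infer_instance))
  rw [integral_congr_ae (Filter.Eventually.of_forall hinner)]
  have intA : Integrable (fun y => (∫⁻ z, ENNReal.ofReal (h z) ∂(K y)).toReal) ν :=
    (integrable_const (ENNReal.ofReal C).toReal).mono' hAm.ennreal_toReal.aestronglyMeasurable
      (Filter.Eventually.of_forall fun y => by
        rw [Real.norm_eq_abs, abs_of_nonneg ENNReal.toReal_nonneg]
        exact ENNReal.toReal_mono ENNReal.ofReal_ne_top (hAb y))
  have intB : Integrable (fun y => (∫⁻ z, ENNReal.ofReal (-h z) ∂(K y)).toReal) ν :=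
    (integrable_const (ENNReal.ofReal C).toReal).mono' hBm.ennreal_toReal.aestronglyMeasurable
      (Filter.Eventually.of_forall fun y => by
        rw [Real.norm_eq_abs, abs_of_nonneg ENNReal.toReal_nonneg]
        exact ENNReal.toReal_mono ENNReal.ofReal_ne_top (hBb y))
  rw [integral_sub intA intB,
    integral_toReal hAm.aemeasurable
      (Filter.Eventually.of_forall fun y => lt_of_le_of_lt (hAb y) ENNReal.ofReal_lt_top),
    integral_toReal hBm.aemeasurable
      (Filter.Eventually.of_forall fun y => lt_of_le_of_lt (hBb y) ENNReal.ofReal_lt_top)]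

section Hyps

variable (μ : Measure X) [IsProbabilityMeasure μ]
variable (q : X → X → ℝ) (g : X → Y → ℝ) (ys : ℕ → Y) (n : ℕ) (σp σm : ℝ)
variable (hσm : 0 < σm)
variable (hq_meas : Measurable (Function.uncurry q))
variable (hq0 : ∀ a b, 0 ≤ q a b)
variable (hq_low : ∀ a b, σm ≤ q a b) (hq_up : ∀ a b, q a b ≤ σp)
variable (hg_meas : ∀ yv, Measurable fun x => g x yv)
variable (hg_nonneg : ∀ x yv, 0 ≤ g x yv)
variable (hg_bdd : ∀ yv, ∃ C, ∀ x, g x yv ≤ C)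
variable (hg_pos : ∀ yv, 0 < ∫ x, g x yv ∂μ)

lemma LF_dep (i : ℕ) (f : (ℕ → X) → ℝ)
    (hf : ∀ x x' : ℕ → X, (∀ j, i ≤ j → j ≤ n → x j = x' j) → f x = f x') :
    ∀ m, m ≤ n → ∀ x x' : ℕ → X, (∀ j, min i (n - m) ≤ j → j ≤ n - m → x j = x' j) →
      LF μ q g ys n m f x = LF μ q g ys n m f x' := by
  intro m
  induction m with
  | zero =>
    intro _ x x' h
    refine hf x x' fun j hij hjn => h j ?_ ?_ <;> omega
  | succ m ih =>
    intro hm x x' h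
    rw [LF_succ, LF_succ]
    refine integral_congr_ae (Filter.Eventually.of_forall fun z => ?_)
    have e1 : x (n - m - 1) = x' (n - m - 1) := h _ (by omega) (by omega)
    show g z (ys (n - m)) * q (x (n - m - 1)) z *
        LF μ q g ys n m f (Function.update x (n - m) z)
      = g z (ys (n - m)) * q (x' (n - m - 1)) z *
        LF μ q g ys n m f (Function.update x' (n - m) z)
    rw [e1]
    congr 1
    refine ih (by omega) _ _ fun j h1 h2 => ?_
    rcases eq_or_ne j (n - m) with rfl | hne
    · simp
    · rw [Function.update_of_ne hne, Function.update_of_ne hne]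
      exact h j (by omega) (by omega)

include hq_meas hq0 hq_up hg_meas hg_nonneg hg_bdd in
lemma LF_aux :
    ∀ (m : ℕ) (f : (ℕ → X) → ℝ), Measurable f → (∃ C, ∀ x, |f x| ≤ C) →
      Measurable (LF μ q g ys n m f) ∧ ∃ C, ∀ x, |LF μ q g ys n m f x| ≤ C := by
  intro m
  induction m with
  | zero => intro f hf hb; exact ⟨hf, hb⟩
  | succ m ih =>
    intro f hf hb
    obtain ⟨hmeas, C, hC⟩ := ih f hf hb
    have hF : Measurable (fun p : (ℕ → X) × X =>
        g p.2 (ys (n - m)) * q (p.1 (n - m - 1)) p.2 *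
          LF μ q g ys n m f (Function.update p.1 (n - m) p.2)) := by
      refine Measurable.mul (Measurable.mul ?_ ?_) ?_
      · exact (hg_meas _).comp measurable_snd
      · have e : (fun p : (ℕ → X) × X => q (p.1 (n - m - 1)) p.2) =
            Function.uncurry q ∘ (fun p : (ℕ → X) × X => (p.1 (n - m - 1), p.2)) := rfl
        rw [e]
        exact hq_meas.comp (((measurable_pi_apply _).comp measurable_fst).prodMk measurable_snd)
      · exact hmeas.comp measurable_update'
    constructor
    · have heq : LF μ q g ys n (m + 1) f = fun x => ∫ x', (fun p : (ℕ → X) × X =>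
          g p.2 (ys (n - m)) * q (p.1 (n - m - 1)) p.2 *
            LF μ q g ys n m f (Function.update p.1 (n - m) p.2)) (x, x') ∂μ := rfl
      rw [heq]
      exact hF.stronglyMeasurable.integral_prod_right'.measurable
    · obtain ⟨G, hG⟩ := hg_bdd (ys (n - m))
      refine ⟨G * σp * C, fun x => ?_⟩
      have hnorm := norm_integral_le_of_norm_le_const (μ := μ)
        (f := fun x' => g x' (ys (n - m)) * q (x (n - m - 1)) x' *
          LF μ q g ys n m f (Function.update x (n - m) x')) (C := G * σp * C)
        (Filter.Eventually.of_forall fun x' => by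
          rw [Real.norm_eq_abs]
          exact abs_mul3_le (hg_nonneg _ _) (hG x') (hq0 _ _) (hq_up _ _) (hC _))
      rw [LF_succ]
      simpa [Real.norm_eq_abs] using hnorm

include hq_meas hq0 hq_up hg_meas hg_nonneg hg_bdd in
lemma LF_integrand_integrable (m : ℕ) (f : (ℕ → X) → ℝ) (hfm : Measurable f)
    (hfb : ∃ C, ∀ x, |f x| ≤ C) (x : ℕ → X) :
    Integrable (fun z => g z (ys (n - m)) * q (x (n - m - 1)) z *
      LF μ q g ys n m f (Function.update x (n - m) z)) μ := by
  obtain ⟨hm, C, hC⟩ := LF_aux μ q g ys n σp hq_meas hq0 hq_up hg_meas hg_nonneg hg_bdd m f hfm hfb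
  obtain ⟨G, hG⟩ := hg_bdd (ys (n - m))
  refine bdd_integrable ?_ (C := G * σp * C)
    (fun z => abs_mul3_le (hg_nonneg _ _) (hG z) (hq0 _ _) (hq_up _ _) (hC _))
  refine Measurable.mul (Measurable.mul (hg_meas _) ?_) (hm.comp (measurable_update x))
  exact hq_meas.comp (measurable_const.prodMk measurable_id)

include hσm hq_meas hq0 hq_low hq_up hg_meas hg_nonneg hg_bdd hg_pos in
lemma LF_one_lb : ∀ m : ℕ, ∃ c : ℝ, 0 < c ∧ ∀ x : ℕ → X, c ≤ LF μ q g ys n m (fun _ => 1) x := by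
  intro m
  induction m with
  | zero => exact ⟨1, one_pos, fun _ => le_of_eq rfl⟩
  | succ m ih =>
    obtain ⟨c, hc, hlb⟩ := ih
    obtain ⟨G, hG⟩ := hg_bdd (ys (n - m))
    refine ⟨(∫ z, g z (ys (n - m)) ∂μ) * (σm * c),
      mul_pos (hg_pos _) (mul_pos hσm hc), fun x => ?_⟩
    have gInt : Integrable (fun z => g z (ys (n - m))) μ :=
      bdd_integrable (hg_meas _) (C := G) fun z => by
        rw [abs_of_nonneg (hg_nonneg _ _)]; exact hG z
    have int2 := LF_integrand_integrable μ q g ys n σp hq_meas hq0 hq_up hg_meas hg_nonneg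
      hg_bdd m (fun _ => 1) measurable_const ⟨1, by simp⟩ x
    rw [LF_succ]
    calc (∫ z, g z (ys (n - m)) ∂μ) * (σm * c)
        = ∫ z, g z (ys (n - m)) * (σm * c) ∂μ := (integral_mul_const _ _).symm
      _ ≤ ∫ z, g z (ys (n - m)) * q (x (n - m - 1)) z *
            LF μ q g ys n m (fun _ => 1) (Function.update x (n - m) z) ∂μ := by
          refine integral_mono (gInt.mul_const _) int2 fun z => ?_
          rw [mul_assoc]
          exact mul_le_mul_of_nonneg_left
            (mul_le_mul (hq_low _ _) (hlb _) hc.le (hσm.le.trans (hq_low _ _)))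
            (hg_nonneg _ _)

include hσm hq_meas hq0 hq_low hq_up hg_meas hg_nonneg hg_bdd hg_pos in
lemma Lmass_pos (j : ℕ) (z : X) : 0 < Lmass μ q g ys n j z := by
  obtain ⟨c, hc, hlb⟩ := LF_one_lb μ q g ys n σp σm hσm hq_meas hq0 hq_low hq_up hg_meas
    hg_nonneg hg_bdd hg_pos (n - j)
  exact lt_of_lt_of_le hc (hlb _)

include hq_meas hq0 hq_up hg_meas hg_nonneg hg_bdd in
lemma Lmass_meas (j : ℕ) : Measurable (Lmass μ q g ys n j) := by
  have h := (LF_aux μ q g ys n σp hq_meas hq0 hq_up hg_meas hg_nonneg hg_bdd (n - j)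
    (fun _ => 1) measurable_const ⟨1, fun _ => by simp⟩).1
  exact h.comp (measurable_pi_lambda _ fun _ => measurable_id)

include hq_meas hq0 hq_up hg_meas hg_nonneg hg_bdd in
lemma Lmass_bdd (j : ℕ) : ∃ C : ℝ, ∀ z, |Lmass μ q g ys n j z| ≤ C := by
  obtain ⟨_, C, hC⟩ := LF_aux μ q g ys n σp hq_meas hq0 hq_up hg_meas hg_nonneg hg_bdd (n - j)
    (fun _ => 1) measurable_const ⟨1, fun _ => by simp⟩
  exact ⟨C, fun z => hC _⟩

lemma Lmass_rec (j : ℕ) (hj : j < n) (x : X) :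
    Lmass μ q g ys n j x = ∫ z, g z (ys (j + 1)) * q x z * Lmass μ q g ys n (j + 1) z ∂μ := by
  have h1 : n - j = (n - (j + 1)) + 1 := by omega
  show LF μ q g ys n (n - j) (fun _ => 1) (fun _ => x) = _
  rw [h1, LF_succ]
  have h2 : n - (n - (j + 1)) = j + 1 := by omega
  rw [h2]
  refine integral_congr_ae (Filter.Eventually.of_forall fun z => ?_)
  refine congrArg₂ (· * ·) rfl ?_
  refine LF_dep μ q g ys n n (fun _ => 1) (fun _ _ _ => rfl) (n - (j + 1)) (by omega) _ _
    fun jj hj1 hj2 => ?_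
  have hjj : jj = j + 1 := by omega
  subst hjj
  simp

include hq_meas hq0 hq_up hg_meas hg_nonneg hg_bdd in
lemma W_meas (j : ℕ) : Measurable (fun p : X × X =>
    g p.2 (ys (j + 1)) * Lmass μ q g ys n (j + 1) p.2 * q p.1 p.2 /
      Lmass μ q g ys n j p.1) := by
  refine Measurable.div ?_
    ((Lmass_meas μ q g ys n σp hq_meas hq0 hq_up hg_meas hg_nonneg hg_bdd j).comp measurable_fst)
  refine Measurable.mul (Measurable.mul ?_ ?_) ?_
  · exact (hg_meas _).comp measurable_snd
  · exact (Lmass_meas μ q g ys n σp hq_meas hq0 hq_up hg_meas hg_nonneg hg_bdd (j + 1)).comp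
      measurable_snd
  · exact hq_meas

include hq_meas hq0 hq_up hg_meas hg_nonneg hg_bdd in
lemma Fker_measurable (j : ℕ) (hj : j < n) : Measurable (Fker μ q g ys n j) := by
  refine Measure.measurable_of_measurable_coe _ fun s hs => ?_
  simp only [Fker, if_pos hj]
  simp_rw [withDensity_apply _ hs]
  exact Measurable.lintegral_prod_right'
    ((W_meas μ q g ys n σp hq_meas hq0 hq_up hg_meas hg_nonneg hg_bdd j).ennreal_ofReal)

include hσm hq_meas hq0 hq_low hq_up hg_meas hg_nonneg hg_bdd hg_pos in
lemma Fker_isProb (j : ℕ) (hj : j < n) (x : X) :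
    IsProbabilityMeasure (Fker μ q g ys n j x) := by
  have hLpos := Lmass_pos μ q g ys n σp σm hσm hq_meas hq0 hq_low hq_up hg_meas hg_nonneg
    hg_bdd hg_pos
  constructor
  simp only [Fker, if_pos hj]
  rw [withDensity_apply _ MeasurableSet.univ, Measure.restrict_univ]
  have hWnn : ∀ z, 0 ≤ g z (ys (j + 1)) * Lmass μ q g ys n (j + 1) z * q x z /
      Lmass μ q g ys n j x := fun z =>
    div_nonneg (mul_nonneg (mul_nonneg (hg_nonneg _ _) (hLpos (j + 1) z).le)
      (hq0 _ _)) (hLpos j x).le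
  have hWint : Integrable (fun z => g z (ys (j + 1)) * Lmass μ q g ys n (j + 1) z * q x z /
      Lmass μ q g ys n j x) μ := by
    obtain ⟨G, hG⟩ := hg_bdd (ys (j + 1))
    obtain ⟨CL, hCL⟩ := Lmass_bdd μ q g ys n σp hq_meas hq0 hq_up hg_meas hg_nonneg hg_bdd (j + 1)
    refine Integrable.div_const ?_ _
    refine bdd_integrable ?_ (C := G * CL * σp) fun z => ?_
    · refine Measurable.mul (Measurable.mul (hg_meas _)
        (Lmass_meas μ q g ys n σp hq_meas hq0 hq_up hg_meas hg_nonneg hg_bdd (j + 1))) ?_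
      exact hq_meas.comp (measurable_const.prodMk measurable_id)
    · rw [abs_mul, abs_mul, abs_of_nonneg (hg_nonneg _ _),
        abs_of_nonneg (hLpos (j + 1) z).le, abs_of_nonneg (hq0 _ _)]
      have h0G : (0:ℝ) ≤ G := (hg_nonneg z _).trans (hG z)
      have h0CL : (0:ℝ) ≤ CL := (abs_nonneg _).trans (hCL z)
      have hLle : Lmass μ q g ys n (j + 1) z ≤ CL := (le_abs_self _).trans (hCL z)
      exact mul_le_mul (mul_le_mul (hG z) hLle (hLpos (j + 1) z).le h0G)
        (hq_up x z) (hq0 x z) (mul_nonneg h0G h0CL)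
  rw [← ofReal_integral_eq_lintegral_ofReal hWint (Filter.Eventually.of_forall hWnn)]
  have hone : ∫ z, g z (ys (j + 1)) * Lmass μ q g ys n (j + 1) z * q x z /
      Lmass μ q g ys n j x ∂μ = 1 := by
    have hre : (fun z => g z (ys (j + 1)) * Lmass μ q g ys n (j + 1) z * q x z /
        Lmass μ q g ys n j x) = fun z =>
        (g z (ys (j + 1)) * q x z * Lmass μ q g ys n (j + 1) z) / Lmass μ q g ys n j x := by
      funext z; ring
    rw [hre, integral_div, ← Lmass_rec μ q g ys n j hj x, div_self (hLpos j x).ne']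
  rw [hone, ENNReal.ofReal_one]

include hσm hq_meas hq0 hq_low hq_up hg_meas hg_nonneg hg_bdd hg_pos in
lemma Fstep (i : ℕ) (hin : i ≤ n) (f : (ℕ → X) → ℝ)
    (hf_dep : ∀ x x' : ℕ → X, (∀ j, i ≤ j → j ≤ n → x j = x' j) → f x = f x')
    (j : ℕ) (hji : j < i) (z : X) :
    ∫ w, LF μ q g ys n (n - (j + 1)) f (fun _ => w) / Lmass μ q g ys n (j + 1) w
      ∂(Fker μ q g ys n j z)
    = LF μ q g ys n (n - j) f (fun _ => z) / Lmass μ q g ys n j z := by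
  have hLpos := Lmass_pos μ q g ys n σp σm hσm hq_meas hq0 hq_low hq_up hg_meas hg_nonneg
    hg_bdd hg_pos
  have hjn : j < n := lt_of_lt_of_le hji hin
  simp only [Fker, if_pos hjn]
  have hWm : Measurable (fun x' => (g x' (ys (j + 1)) * Lmass μ q g ys n (j + 1) x' * q z x' /
      Lmass μ q g ys n j z).toNNReal) := by
    refine Measurable.real_toNNReal ?_
    exact ((W_meas μ q g ys n σp hq_meas hq0 hq_up hg_meas hg_nonneg hg_bdd j).comp
      (measurable_const.prodMk measurable_id) : _)
  have hcoe : (fun x' => ENNReal.ofReal (g x' (ys (j + 1)) * Lmass μ q g ys n (j + 1) x' *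
      q z x' / Lmass μ q g ys n j z)) = fun x' =>
      ((fun x' => (g x' (ys (j + 1)) * Lmass μ q g ys n (j + 1) x' * q z x' /
        Lmass μ q g ys n j z).toNNReal) x' : ℝ≥0∞) := rfl
  rw [hcoe, integral_withDensity_eq_integral_smul hWm]
  have hpt : ∀ x', (g x' (ys (j + 1)) * Lmass μ q g ys n (j + 1) x' * q z x' /
        Lmass μ q g ys n j z).toNNReal •
        (LF μ q g ys n (n - (j + 1)) f (fun _ => x') / Lmass μ q g ys n (j + 1) x')
      = g x' (ys (j + 1)) * q z x' * LF μ q g ys n (n - (j + 1)) f (fun _ => x') /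
        Lmass μ q g ys n j z := by
    intro x'
    have hWnn : 0 ≤ g x' (ys (j + 1)) * Lmass μ q g ys n (j + 1) x' * q z x' /
        Lmass μ q g ys n j z :=
      div_nonneg (mul_nonneg (mul_nonneg (hg_nonneg _ _)
        (hLpos (j + 1) x').le) (hq0 _ _)) (hLpos j z).le
    rw [NNReal.smul_def, Real.coe_toNNReal _ hWnn, smul_eq_mul]
    have h1 : Lmass μ q g ys n (j + 1) x' ≠ 0 := (hLpos (j + 1) x').ne'
    have h2 : Lmass μ q g ys n j z ≠ 0 := (hLpos j z).ne'
    field_simp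
  rw [integral_congr_ae (Filter.Eventually.of_forall hpt), integral_div]
  have hLL : LF μ q g ys n (n - j) f (fun _ => z) =
      ∫ x', g x' (ys (j + 1)) * q z x' * LF μ q g ys n (n - (j + 1)) f (fun _ => x') ∂μ := by
    have h1 : n - j = (n - (j + 1)) + 1 := by omega
    rw [h1, LF_succ]
    have h2 : n - (n - (j + 1)) = j + 1 := by omega
    rw [h2]
    refine integral_congr_ae (Filter.Eventually.of_forall fun w => ?_)
    show g w (ys (j + 1)) * q z w *
        LF μ q g ys n (n - (j + 1)) f (Function.update (fun _ => z) (j + 1) w)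
      = g w (ys (j + 1)) * q z w * LF μ q g ys n (n - (j + 1)) f (fun _ => w)
    refine congrArg₂ (· * ·) rfl ?_
    refine LF_dep μ q g ys n i f hf_dep (n - (j + 1)) (by omega) _ _ fun jj hj1 hj2 => ?_
    have hjj : jj = j + 1 := by omega
    subst hjj
    simp
  rw [hLL]

end Hyps

/-- **Forward-kernel representation.** Assume (A1), let `0 ≤ k < i ≤ n` and
let `f` be bounded measurable and depend only on the coordinates `(x_i, …, x_n)`.
Then `L_i⋯L_{n−1} f` depends only on the coordinate `x_i`, and
`L_k⋯L_{n−1} f(x_{0:k}) / L_k⋯L_{n−1}(x_k, X^{n+1})` equals the integral of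
`h(x_i) = L_i⋯L_{n−1} f(x_i) / L_i⋯L_{n−1}(x_i, X^{n+1})` against the
composition `F_{k|n} F_{k+1|n} ⋯ F_{i−1|n}(x_k, ·)` (realized as
`δ_{x_k} F_{k|n} ⋯ F_{i−1|n}`). -/
theorem forward_kernel_representation
    (μ : Measure X) [IsProbabilityMeasure μ]
    (q : X → X → ℝ) (g : X → Y → ℝ) (ys : ℕ → Y) (n : ℕ)
    (σm σp : ℝ)
    (hσm : 0 < σm)
    (hq_meas : Measurable (Function.uncurry q))
    (hq_low : ∀ a b, σm ≤ q a b) (hq_up : ∀ a b, q a b ≤ σp)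
    (hg_meas : ∀ yv, Measurable fun x => g x yv)
    (hg_nonneg : ∀ x yv, 0 ≤ g x yv)
    (hg_bdd : ∀ yv, ∃ C, ∀ x, g x yv ≤ C)
    (hg_pos : ∀ yv, 0 < ∫ x, g x yv ∂μ)
    (k i : ℕ) (hki : k < i) (hin : i ≤ n)
    (f : (ℕ → X) → ℝ) (hf_meas : Measurable f)
    (hf_bdd : ∃ C, ∀ x, |f x| ≤ C)
    (hf_dep : ∀ x x' : ℕ → X, (∀ j, i ≤ j → j ≤ n → x j = x' j) → f x = f x') :
    (∀ x x' : ℕ → X, x i = x' i → LF μ q g ys n (n - i) f x = LF μ q g ys n (n - i) f x') ∧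
      ∀ x : ℕ → X,
        LF μ q g ys n (n - k) f x / Lmass μ q g ys n k (x k) =
          ∫ xi,
            LF μ q g ys n (n - i) f (fun _ => xi) / Lmass μ q g ys n i xi
            ∂(kcompFrom (Fker μ q g ys n) k (Measure.dirac (x k)) (i - 1 - k)) := by
  have hq0 : ∀ a b, 0 ≤ q a b := fun a b => hσm.le.trans (hq_low a b)
  constructor
  · intro x x' hxx'
    refine LF_dep μ q g ys n i f hf_dep (n - i) (by omega) x x' fun j h1 h2 => ?_
    have hji : j = i := by omega
    subst hji
    exact hxx'
  · intro x
    have hLpos := Lmass_pos μ q g ys n σp σm hσm hq_meas hq0 hq_low hq_up hg_meas hg_nonneg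
      hg_bdd hg_pos
    have measKer : ∀ j, j < n → Measurable (Fker μ q g ys n j) := fun j hj =>
      Fker_measurable μ q g ys n σp hq_meas hq0 hq_up hg_meas hg_nonneg hg_bdd j hj
    have probKer : ∀ j, j < n → ∀ zz : X, IsProbabilityMeasure (Fker μ q g ys n j zz) :=
      fun j hj zz => Fker_isProb μ q g ys n σp σm hσm hq_meas hq0 hq_low hq_up hg_meas
        hg_nonneg hg_bdd hg_pos j hj zz
    have Hmeas : ∀ j : ℕ, Measurable (fun z : X =>
        LF μ q g ys n (n - j) f (fun _ => z) / Lmass μ q g ys n j z) := by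
      intro j
      have h1 := (LF_aux μ q g ys n σp hq_meas hq0 hq_up hg_meas hg_nonneg hg_bdd (n - j)
        f hf_meas hf_bdd).1
      exact (h1.comp (measurable_pi_lambda _ fun _ => measurable_id)).div
        (Lmass_meas μ q g ys n σp hq_meas hq0 hq_up hg_meas hg_nonneg hg_bdd j)
    have Hbdd : ∀ j : ℕ, ∃ C : ℝ, ∀ z : X,
        |LF μ q g ys n (n - j) f (fun _ => z) / Lmass μ q g ys n j z| ≤ C := by
      intro j
      obtain ⟨_, C, hC⟩ := LF_aux μ q g ys n σp hq_meas hq0 hq_up hg_meas hg_nonneg hg_bdd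
        (n - j) f hf_meas hf_bdd
      obtain ⟨c, hc, hlb⟩ := LF_one_lb μ q g ys n σp σm hσm hq_meas hq0 hq_low hq_up hg_meas
        hg_nonneg hg_bdd hg_pos (n - j)
      have hC0 : 0 ≤ C := (abs_nonneg _).trans (hC (fun _ => x 0))
      refine ⟨C / c, fun z => ?_⟩
      rw [abs_div, abs_of_pos (hLpos j z)]
      exact div_le_div₀ hC0 (hC _) hc (hlb (fun _ => z))
    have chain : ∀ jj : ℕ, k + jj + 1 ≤ i →
        IsProbabilityMeasure (kcompFrom (Fker μ q g ys n) k (Measure.dirac (x k)) jj) ∧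
        ∫ z, LF μ q g ys n (n - (k + jj + 1)) f (fun _ => z) /
            Lmass μ q g ys n (k + jj + 1) z
          ∂(kcompFrom (Fker μ q g ys n) k (Measure.dirac (x k)) jj)
        = LF μ q g ys n (n - k) f (fun _ => x k) / Lmass μ q g ys n k (x k) := by
      intro jj
      induction jj with
      | zero =>
        intro hle
        have hkn : k < n := by omega
        have e : kcompFrom (Fker μ q g ys n) k (Measure.dirac (x k)) 0
            = Fker μ q g ys n k (x k) :=
          Measure.dirac_bind (measKer k hkn) (x k)
        constructor
        · rw [e]; exact probKer k hkn (x k)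
        · rw [e]
          exact Fstep μ q g ys n σp σm hσm hq_meas hq0 hq_low hq_up hg_meas hg_nonneg
            hg_bdd hg_pos i hin f hf_dep k (by omega) (x k)
      | succ jj ih =>
        intro hle
        obtain ⟨hprob, heq⟩ := ih (by omega)
        have hidx : k + jj + 1 < n := by omega
        have e : kcompFrom (Fker μ q g ys n) k (Measure.dirac (x k)) (jj + 1)
            = (kcompFrom (Fker μ q g ys n) k (Measure.dirac (x k)) jj).bind
              (Fker μ q g ys n (k + jj + 1)) := rfl
        have hidx2 : k + (jj + 1) + 1 = k + jj + 1 + 1 := by omega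
        constructor
        · rw [e]
          haveI := hprob
          exact isProb_bind _ _ (measKer _ hidx) (probKer _ hidx)
        · rw [e, hidx2]
          haveI := hprob
          obtain ⟨C, hCb⟩ := Hbdd (k + jj + 1 + 1)
          rw [integral_bind_eq (measKer _ hidx) (probKer _ hidx) (Hmeas _) hCb]
          rw [integral_congr_ae (Filter.Eventually.of_forall fun y =>
            Fstep μ q g ys n σp σm hσm hq_meas hq0 hq_low hq_up hg_meas hg_nonneg
              hg_bdd hg_pos i hin f hf_dep (k + jj + 1) (by omega) y)]
          exact heq
    obtain ⟨_, hch⟩ := chain (i - 1 - k) (by omega)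
    have hidx3 : k + (i - 1 - k) + 1 = i := by omega
    rw [hidx3] at hch
    have e0 : LF μ q g ys n (n - k) f x = LF μ q g ys n (n - k) f (fun _ => x k) :=
      LF_dep μ q g ys n i f hf_dep (n - k) (by omega) x (fun _ => x k) (fun jj h1 h2 => by
        have hjk : jj = k := by omega
        subst hjk
        rfl)
    rw [e0]
    exact hch.symm


end
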